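/- Let γ ∈ (0, 2s) and let v : ℝⁿ → ℝ be a measurable function such that v(x) ≤ |x|^γ for every x ∈ ℝⁿ and v(x) = |x|^γ for every x ∈ ℝⁿ ∖ B₁. Then there exists a constant C > 0, depending only on n, s, Λ and γ, such that ℐv(x) ≤ C for every x ∈ ℝⁿ ∖ B₁. -/

import Mathlib

open MeasureTheory

/-- The anisotropic integro-differential operator
`ℐv(x) = ∫_{S^{n-1} × ℝ} (v(x + rϑ) + v(x − rϑ) − 2v(x)) dμ(ϑ) dr / |r|^{1+2s}`. -/
noncomputable def opI (n : ℕ) (s : ℝ)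
    (μ : Measure (Metric.sphere (0 : EuclideanSpace ℝ (Fin n)) 1))
    (v : EuclideanSpace ℝ (Fin n) → ℝ) (x : EuclideanSpace ℝ (Fin n)) : ℝ :=
  ∫ p : Metric.sphere (0 : EuclideanSpace ℝ (Fin n)) 1 × ℝ,
    (v (x + p.2 • (p.1 : EuclideanSpace ℝ (Fin n))) +
      v (x - p.2 • (p.1 : EuclideanSpace ℝ (Fin n))) - 2 * v x) / |p.2| ^ (1 + 2 * s)
    ∂(μ.prod volume)

/- ### Auxiliary lemmas -/

/-- If the `ofReal`-lintegral of `f` is bounded by `ofReal C` with `0 ≤ C`,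
then the Bochner integral of `f` is bounded by `C`. -/
lemma my_integral_le {α : Type*} [MeasurableSpace α] {ν : Measure α} (f : α → ℝ) {C : ℝ}
    (hC : 0 ≤ C) (h : ∫⁻ a, ENNReal.ofReal (f a) ∂ν ≤ ENNReal.ofReal C) :
    ∫ a, f a ∂ν ≤ C := by
  by_cases hint : Integrable f ν
  · have h1 : ∫ a, f a ∂ν ≤ ∫ a, max (f a) 0 ∂ν :=
      integral_mono hint hint.pos_part (fun a => le_max_left _ _)
    have h2 := integral_eq_lintegral_of_nonneg_ae (μ := ν) (f := fun a => max (f a) 0)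
      (Filter.Eventually.of_forall fun a => le_max_right _ _)
      hint.pos_part.aestronglyMeasurable
    have h3 : ∀ a, ENNReal.ofReal (max (f a) 0) = ENNReal.ofReal (f a) := by
      intro a
      rcases le_total (f a) 0 with h' | h'
      · rw [max_eq_right h', ENNReal.ofReal_of_nonpos h', ENNReal.ofReal_zero]
      · rw [max_eq_left h']
    simp_rw [h3] at h2
    rw [h2] at h1
    refine h1.trans ?_
    calc (∫⁻ a, ENNReal.ofReal (f a) ∂ν).toReal ≤ (ENNReal.ofReal C).toReal :=
          ENNReal.toReal_mono ENNReal.ofReal_ne_top h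
      _ = C := ENNReal.toReal_ofReal hC
  · rw [integral_undef hint]; exact hC

lemma my_mul_self_rpow {c : ℝ} (hc : 0 ≤ c) (p : ℝ) : (c * c) ^ p = c ^ (2 * p) := by
  have : c * c = c ^ (2 : ℝ) := by rw [Real.rpow_two]; ring
  rw [this, ← Real.rpow_mul hc]

/-- Subadditivity of `rpow` with exponent in `[0, 1]`. -/
lemma my_rpow_add_le {a b p : ℝ} (ha : 0 ≤ a) (hb : 0 ≤ b) (hp : 0 ≤ p) (hp1 : p ≤ 1) :
    (a + b) ^ p ≤ a ^ p + b ^ p := by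
  have := NNReal.rpow_add_le_add_rpow a.toNNReal b.toNNReal hp hp1
  have h1 : ((a.toNNReal + b.toNNReal : NNReal) : ℝ) = a + b := by
    simp [Real.toNNReal_of_nonneg, ha, hb]
  calc (a + b) ^ p = ((a.toNNReal + b.toNNReal : NNReal) : ℝ) ^ p := by rw [h1]
    _ = (((a.toNNReal + b.toNNReal) ^ p : NNReal) : ℝ) := by rw [← NNReal.coe_rpow]
    _ ≤ ((a.toNNReal ^ p + b.toNNReal ^ p : NNReal) : ℝ) := by exact_mod_cast this
    _ = a ^ p + b ^ p := by
        push_cast [NNReal.coe_rpow]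
        rw [Real.coe_toNNReal a ha, Real.coe_toNNReal b hb]

/-- Tangent-line estimate for the concave function `u ↦ u ^ p`, `p ∈ [0, 1]`, at `u ≥ 1`. -/
lemma my_rpow_tangent {u δ p : ℝ} (hu : 1 ≤ u) (hδ : 0 ≤ δ) (hp : 0 ≤ p) (hp1 : p ≤ 1) :
    (u + δ) ^ p ≤ u ^ p + δ := by
  have hu0 : 0 < u := lt_of_lt_of_le one_pos hu
  have h1 : u + δ = u * (1 + δ / u) := by field_simp
  have h2 : (u * (1 + δ / u)) ^ p = u ^ p * (1 + δ / u) ^ p :=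
    Real.mul_rpow hu0.le (by positivity)
  have h3 : (1 + δ / u) ^ p ≤ 1 + p * (δ / u) :=
    rpow_one_add_le_one_add_mul_self (by linarith [div_nonneg hδ hu0.le]) hp hp1
  have h4 : u ^ p * (1 + δ / u) ^ p ≤ u ^ p * (1 + p * (δ / u)) := by
    have : (0:ℝ) ≤ u ^ p := Real.rpow_nonneg hu0.le p
    nlinarith [Real.rpow_pos_of_pos hu0 p]
  have h5 : u ^ p * (1 + p * (δ / u)) = u ^ p + p * (u ^ (p - 1) * δ) := by
    rw [Real.rpow_sub_one hu0.ne']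
    field_simp
  have h6 : u ^ (p - 1) ≤ 1 := Real.rpow_le_one_of_one_le_of_nonpos hu (by linarith)
  have h7 : p * (u ^ (p - 1) * δ) ≤ δ := by
    have h8 : (0:ℝ) ≤ u ^ (p-1) := Real.rpow_nonneg hu0.le _
    have hA : u ^ (p-1) * δ ≤ δ := mul_le_of_le_one_left hδ h6
    have hB : p * (u ^ (p-1) * δ) ≤ 1 * (u ^ (p-1) * δ) :=
      mul_le_mul_of_nonneg_right hp1 (mul_nonneg h8 hδ)
    linarith
  calc (u + δ) ^ p = u ^ p * (1 + δ / u) ^ p := by rw [h1, h2]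
    _ ≤ u ^ p * (1 + p * (δ / u)) := h4
    _ = u ^ p + p * (u ^ (p-1) * δ) := h5
    _ ≤ u ^ p + δ := by linarith

/-- The key second-difference bound for `y ↦ ‖y‖ ^ γ` outside the unit ball. -/
lemma my_second_diff {n : ℕ} {γ : ℝ} (hγ0 : 0 < γ) (hγ2 : γ < 2)
    (x h : EuclideanSpace ℝ (Fin n)) (hx : 1 ≤ ‖x‖) :
    ‖x + h‖ ^ γ + ‖x - h‖ ^ γ - 2 * ‖x‖ ^ γ
      ≤ 2 * min (‖h‖ ^ (2:ℝ)) (‖h‖ ^ γ) := by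
  set p : ℝ := γ / 2 with hp_def
  have hp0 : 0 < p := by positivity
  have hp1 : p < 1 := by rw [hp_def]; linarith
  set P : ℝ := ‖x + h‖
  set M : ℝ := ‖x - h‖
  set a : ℝ := ‖x‖
  set t : ℝ := ‖h‖
  have hP : 0 ≤ P := norm_nonneg _
  have hM : 0 ≤ M := norm_nonneg _
  have ha : 0 ≤ a := norm_nonneg _
  have ht : 0 ≤ t := norm_nonneg _
  have hpar : P * P + M * M = 2 * (a * a + t * t) :=
    by simpa only [sq] using parallelogram_law_with_norm ℝ x h
  have hconc := (Real.concaveOn_rpow hp0.le hp1.le).2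
    (Set.mem_Ici.2 (mul_nonneg hP hP)) (Set.mem_Ici.2 (mul_nonneg hM hM))
    (by norm_num : (0:ℝ) ≤ 1/2) (by norm_num : (0:ℝ) ≤ 1/2) (by norm_num)
  simp only [smul_eq_mul] at hconc
  have hmid : (1/2 : ℝ) * (P * P) + (1/2 : ℝ) * (M * M) = a * a + t * t := by linarith
  rw [hmid] at hconc
  have eP : (P * P) ^ p = P ^ γ := by
    rw [my_mul_self_rpow hP]; congr 1; rw [hp_def]; ring
  have eM : (M * M) ^ p = M ^ γ := by
    rw [my_mul_self_rpow hM]; congr 1; rw [hp_def]; ring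
  rw [eP, eM] at hconc
  have hsub : (a * a + t * t) ^ p ≤ a ^ γ + t ^ γ := by
    have := my_rpow_add_le (mul_nonneg ha ha) (mul_nonneg ht ht) hp0.le hp1.le
    rw [my_mul_self_rpow ha, my_mul_self_rpow ht] at this
    have h2p : 2 * p = γ := by rw [hp_def]; ring
    rwa [h2p] at this
  have htan : (a * a + t * t) ^ p ≤ a ^ γ + t ^ (2:ℝ) := by
    have hu1 : 1 ≤ a * a := one_le_mul_of_one_le_of_one_le hx hx
    have := my_rpow_tangent hu1 (mul_nonneg ht ht) hp0.le hp1.le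
    rw [my_mul_self_rpow ha] at this
    have h2p : 2 * p = γ := by rw [hp_def]; ring
    rw [h2p] at this
    have h2 : t ^ (2:ℝ) = t * t := by rw [Real.rpow_two]; ring
    rw [h2]; exact this
  have hmin : (a * a + t * t) ^ p ≤ a ^ γ + min (t ^ (2:ℝ)) (t ^ γ) := by
    rcases min_cases (t ^ (2:ℝ)) (t ^ γ) with ⟨he, _⟩ | ⟨he, _⟩ <;> rw [he]
    · exact htan
    · exact hsub
  linarith

/-- Integrability of the radial comparison kernel. -/
lemma my_psi_tilde_integrable {s γ : ℝ} (hs0 : 0 < s) (hs1 : s < 1) (hγ0 : 0 < γ)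
    (hγ : γ < 2 * s) :
    Integrable (fun r : ℝ => if |r| ≤ 1 then |r| ^ (1 - 2*s) else |r| ^ (γ - 1 - 2*s))
      volume := by
  set F : ℝ → ℝ := fun r => if |r| ≤ 1 then |r| ^ (1 - 2*s) else |r| ^ (γ - 1 - 2*s) with hF
  have hIci : IntegrableOn F (Set.Ici 0) volume := by
    have h01 : IntegrableOn F (Set.Icc 0 1) volume := by
      rw [integrableOn_Icc_iff_integrableOn_Ioc]
      have hbase : IntervalIntegrable (fun x : ℝ => x ^ (1 - 2*s)) volume 0 1 :=
        intervalIntegral.intervalIntegrable_rpow' (by linarith)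
      rw [intervalIntegrable_iff, Set.uIoc_of_le (by norm_num : (0:ℝ) ≤ 1)] at hbase
      refine hbase.congr_fun (fun r hr => ?_) measurableSet_Ioc
      have h1 : |r| = r := abs_of_pos hr.1
      simp only [hF, h1]
      rw [if_pos hr.2]
    have h1i : IntegrableOn F (Set.Ioi 1) volume := by
      have hb : IntegrableOn (fun x : ℝ => x ^ (γ - 1 - 2*s)) (Set.Ioi 1) volume :=
        integrableOn_Ioi_rpow_of_lt (by linarith) one_pos
      refine hb.congr_fun (fun r hr => ?_) measurableSet_Ioi
      have hr1 : (1:ℝ) < r := hr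
      have h1 : |r| = r := abs_of_pos (by linarith)
      simp only [hF, h1]
      rw [if_neg (not_le.2 hr1)]
    have hdecomp : Set.Ici (0:ℝ) = Set.Icc 0 1 ∪ Set.Ioi 1 := by
      ext r
      simp only [Set.mem_Ici, Set.mem_union, Set.mem_Icc, Set.mem_Ioi]
      constructor
      · intro hr; rcases le_or_gt r 1 with h | h
        · exact Or.inl ⟨hr, h⟩
        · exact Or.inr h
      · rintro (⟨h, _⟩ | h) <;> linarith
    rw [hdecomp]
    exact h01.union h1i
  have hIic : IntegrableOn F (Set.Iic 0) volume := by
    have heven : F ∘ Neg.neg = F := by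
      funext r; simp only [Function.comp_apply, hF, abs_neg]
    have hkey := (MeasurePreserving.integrableOn_comp_preimage
      (Measure.measurePreserving_neg (volume : Measure ℝ))
      (Homeomorph.neg ℝ).measurableEmbedding).2 hIci
    rw [heven] at hkey
    have hpre : (Neg.neg : ℝ → ℝ) ⁻¹' (Set.Ici (0:ℝ)) = Set.Iic 0 := by
      ext r; simp
    rwa [hpre] at hkey
  have huniv : (Set.univ : Set ℝ) = Set.Iic 0 ∪ Set.Ici 0 := by
    ext r; simp [le_total]
  rw [← integrableOn_univ, huniv]
  exact hIic.union hIci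

lemma my_div_le_div {a b d : ℝ} (hab : a ≤ b) (hd : 0 ≤ d) : a / d ≤ b / d := by
  rcases hd.eq_or_lt with h | h
  · rw [← h, div_zero, div_zero]
  · exact (div_le_div_iff_of_pos_right h).2 hab

/-- If `v ≤ |·|^γ` on `ℝⁿ` and `v = |·|^γ` outside `B₁`, with `γ ∈ (0,2s)`, then
`ℐ v ≤ C` outside `B₁`, with `C` depending only on `n`, `s`, `Λ` and `γ`. -/
theorem opI_bound_far_from_origin
    (n : ℕ) (hn : 1 ≤ n) (s : ℝ) (hs : s ∈ Set.Ioo (0 : ℝ) 1)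
    (μ : Measure (Metric.sphere (0 : EuclideanSpace ℝ (Fin n)) 1)) [IsFiniteMeasure μ]
    (Λ : ℝ) (hΛ : 0 < Λ) (hμΛ : μ Set.univ ≤ ENNReal.ofReal Λ)
    (γ : ℝ) (hγ : γ ∈ Set.Ioo (0 : ℝ) (2 * s))
    (v : EuclideanSpace ℝ (Fin n) → ℝ) (hv_meas : Measurable v)
    (hv_le : ∀ x, v x ≤ ‖x‖ ^ γ)
    (hv_eq : ∀ x : EuclideanSpace ℝ (Fin n), 1 ≤ ‖x‖ → v x = ‖x‖ ^ γ) :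
    ∃ C : ℝ, 0 < C ∧
      ∀ x : EuclideanSpace ℝ (Fin n), 1 ≤ ‖x‖ → opI n s μ v x ≤ C := by
  obtain ⟨hs0, hs1⟩ := hs
  obtain ⟨hγ0, hγ2s⟩ := hγ
  have hγ2 : γ < 2 := by linarith
  -- the comparison kernel
  set Ψ : ℝ → ℝ := fun r => 2 * min (|r| ^ (2:ℝ)) (|r| ^ γ) / |r| ^ (1 + 2*s) with hΨ_def
  have hΨ_meas : Measurable Ψ := by
    apply Measurable.div
    · exact measurable_const.mul
        ((continuous_abs.measurable.pow measurable_const).min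
          (continuous_abs.measurable.pow measurable_const))
    · exact continuous_abs.measurable.pow measurable_const
  have hΨ_nonneg : ∀ r, 0 ≤ Ψ r := by
    intro r
    apply div_nonneg _ (Real.rpow_nonneg (abs_nonneg r) _)
    have := Real.rpow_nonneg (abs_nonneg r) (2:ℝ)
    have := Real.rpow_nonneg (abs_nonneg r) γ
    positivity
  -- the dominating integrable kernel
  set F : ℝ → ℝ := fun r => if |r| ≤ 1 then |r| ^ (1 - 2*s) else |r| ^ (γ - 1 - 2*s) with hF_def
  have hFint : Integrable F volume := my_psi_tilde_integrable hs0 hs1 hγ0 hγ2s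
  have hΨF : ∀ r, Ψ r ≤ 2 * F r := by
    intro r
    by_cases h1 : |r| ≤ 1
    · by_cases hr0 : r = 0
      · subst hr0
        simp only [hΨ_def, hF_def, abs_zero]
        rw [Real.zero_rpow (by norm_num : (2:ℝ) ≠ 0), Real.zero_rpow (ne_of_gt hγ0)]
        rw [if_pos (by norm_num : (0:ℝ) ≤ 1)]
        simp only [min_self, mul_zero, zero_div]
        have : (0:ℝ) ≤ (0:ℝ) ^ (1 - 2*s) := Real.rpow_nonneg le_rfl _
        linarith
      · have hr0' : 0 < |r| := abs_pos.2 hr0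
        have hd : 0 < |r| ^ (1 + 2*s) := Real.rpow_pos_of_pos hr0' _
        have h2 : |r| ^ (2:ℝ) / |r| ^ (1 + 2*s) = |r| ^ (1 - 2*s) := by
          rw [← Real.rpow_sub hr0']; congr 1; ring
        calc Ψ r ≤ 2 * |r| ^ (2:ℝ) / |r| ^ (1 + 2*s) :=
              my_div_le_div (mul_le_mul_of_nonneg_left (min_le_left _ _) (by norm_num)) hd.le
          _ = 2 * (|r| ^ (2:ℝ) / |r| ^ (1 + 2*s)) := by ring
          _ = 2 * |r| ^ (1 - 2*s) := by rw [h2]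
          _ = 2 * F r := by rw [hF_def]; simp only [if_pos h1]
    · have hr1 : 1 < |r| := not_le.1 h1
      have hr0' : 0 < |r| := by linarith
      have hd : 0 < |r| ^ (1 + 2*s) := Real.rpow_pos_of_pos hr0' _
      have h2 : |r| ^ γ / |r| ^ (1 + 2*s) = |r| ^ (γ - 1 - 2*s) := by
        rw [← Real.rpow_sub hr0']; congr 1; ring
      calc Ψ r ≤ 2 * |r| ^ γ / |r| ^ (1 + 2*s) :=
            my_div_le_div (mul_le_mul_of_nonneg_left (min_le_right _ _) (by norm_num)) hd.le
        _ = 2 * (|r| ^ γ / |r| ^ (1 + 2*s)) := by ring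
        _ = 2 * |r| ^ (γ - 1 - 2*s) := by rw [h2]
        _ = 2 * F r := by rw [hF_def]; simp only [if_neg h1]
  -- the one-dimensional lintegral
  set L : ENNReal := ∫⁻ r, ENNReal.ofReal (Ψ r) ∂volume with hL_def
  have hLne : L ≠ ⊤ := by
    have hle : L ≤ ∫⁻ r, ENNReal.ofReal (2 * F r) ∂volume :=
      lintegral_mono fun r => ENNReal.ofReal_le_ofReal (hΨF r)
    have heq : ∀ r : ℝ, ENNReal.ofReal (2 * F r) = ENNReal.ofReal 2 * ENNReal.ofReal (F r) :=
      fun r => ENNReal.ofReal_mul (by norm_num)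
    have hle2 : ∫⁻ r, ENNReal.ofReal (2 * F r) ∂volume
        = ENNReal.ofReal 2 * ∫⁻ r, ENNReal.ofReal (F r) ∂volume := by
      simp_rw [heq]
      exact lintegral_const_mul' _ _ ENNReal.ofReal_ne_top
    have hfin : ∫⁻ r, ENNReal.ofReal (F r) ∂volume < ⊤ := by
      refine lt_of_le_of_lt (lintegral_mono fun r => ?_) hFint.hasFiniteIntegral
      exact Real.ofReal_le_enorm (F r)
    refine ne_top_of_le_ne_top ?_ (hle.trans_eq hle2)
    exact ENNReal.mul_ne_top ENNReal.ofReal_ne_top hfin.ne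
  refine ⟨Λ * L.toReal + 1, by positivity, fun x hx => ?_⟩
  rw [opI]
  apply my_integral_le _ (by positivity)
  -- pointwise bound of the integrand by Ψ ∘ snd
  have hpt : ∀ p : Metric.sphere (0 : EuclideanSpace ℝ (Fin n)) 1 × ℝ,
      (v (x + p.2 • (p.1 : EuclideanSpace ℝ (Fin n))) +
        v (x - p.2 • (p.1 : EuclideanSpace ℝ (Fin n))) - 2 * v x) / |p.2| ^ (1 + 2 * s)
      ≤ Ψ p.2 := by
    intro p
    set h : EuclideanSpace ℝ (Fin n) := p.2 • (p.1 : EuclideanSpace ℝ (Fin n)) with hh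
    have hnθ : ‖(p.1 : EuclideanSpace ℝ (Fin n))‖ = 1 :=
      mem_sphere_zero_iff_norm.1 p.1.2
    have hnh : ‖h‖ = |p.2| := by
      rw [hh, norm_smul, Real.norm_eq_abs, hnθ, mul_one]
    have hkey := my_second_diff hγ0 hγ2 x h hx
    rw [hnh] at hkey
    have hnum : v (x + h) + v (x - h) - 2 * v x
        ≤ 2 * min (|p.2| ^ (2:ℝ)) (|p.2| ^ γ) := by
      have e1 := hv_le (x + h)
      have e2 := hv_le (x - h)
      rw [hv_eq x hx]
      linarith
    exact my_div_le_div hnum (Real.rpow_nonneg (abs_nonneg p.2) _)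
  calc ∫⁻ p : Metric.sphere (0 : EuclideanSpace ℝ (Fin n)) 1 × ℝ,
        ENNReal.ofReal ((v (x + p.2 • (p.1 : EuclideanSpace ℝ (Fin n))) +
          v (x - p.2 • (p.1 : EuclideanSpace ℝ (Fin n))) - 2 * v x) / |p.2| ^ (1 + 2 * s))
        ∂(μ.prod volume)
      ≤ ∫⁻ p : Metric.sphere (0 : EuclideanSpace ℝ (Fin n)) 1 × ℝ,
          ENNReal.ofReal (Ψ p.2) ∂(μ.prod volume) :=
        lintegral_mono fun p => ENNReal.ofReal_le_ofReal (hpt p)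
    _ = ∫⁻ _ϑ : Metric.sphere (0 : EuclideanSpace ℝ (Fin n)) 1,
          (∫⁻ r, ENNReal.ofReal (Ψ r) ∂volume) ∂μ :=
        lintegral_prod _ ((hΨ_meas.comp measurable_snd).ennreal_ofReal).aemeasurable
    _ = ∫⁻ _ϑ : Metric.sphere (0 : EuclideanSpace ℝ (Fin n)) 1, L ∂μ := rfl
    _ = L * μ Set.univ := lintegral_const L
    _ ≤ L * ENNReal.ofReal Λ := mul_le_mul_right hμΛ L
    _ = ENNReal.ofReal Λ * ENNReal.ofReal L.toReal := by
        rw [ENNReal.ofReal_toReal hLne, mul_comm]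
    _ = ENNReal.ofReal (Λ * L.toReal) := (ENNReal.ofReal_mul hΛ.le).symm
    _ ≤ ENNReal.ofReal (Λ * L.toReal + 1) := ENNReal.ofReal_le_ofReal (by linarith)
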